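/- Fix integers n ≥ 1 and m ≥ 1. Let L be an n×n matrix with entries in ℂ((ħ^{-1}))[[x_1,…,x_m]] such that L|_{x=0} = Id_n. Then there exist unique n×n matrices L_+ with entries in ℂ[ħ][[x_1,…,x_m]] and L_− with entries in ℂ[[ħ^{-1}]][[x_1,…,x_m]] such that L = L_+ · L_−, L_+|_{x=0} = Id_n, and L_− ∈ Id_n + ħ^{-1} M_n(ℂ[[ħ^{-1}]][[x_1,…,x_m]]) (i.e. the constant term of L_− in ħ^{-1} is the identity). -/

import Mathlib

noncomputable section

/-- `ℂ((ħ⁻¹))`, realized as formal Laurent series (Hahn series over `ℤ`) in the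
variable `X = ħ⁻¹`; the coefficient of `ħ^k` is the coefficient at `z = -k`. -/
abbrev LH : Type := LaurentSeries ℂ

/-- The element `ħ = X⁻¹`: the Hahn series with single coefficient `1` in degree `-1`. -/
def hbar : LH := HahnSeries.single (-1 : ℤ) 1

/-- `f` lies in the subring `ℂ[ħ]` (no positive powers of the variable `X = ħ⁻¹`). -/
def InPolyH (f : LH) : Prop := ∀ z : ℤ, 0 < z → f.coeff z = 0

/-- `f` lies in the subring `ℂ[[ħ⁻¹]]`. -/
def InPSinv (f : LH) : Prop := ∀ z : ℤ, z < 0 → f.coeff z = 0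

/-- `f` lies in `ħ⁻¹ · ℂ[[ħ⁻¹]]` (only strictly negative powers of `ħ`). -/
def InPSinvPos (f : LH) : Prop := ∀ z : ℤ, z ≤ 0 → f.coeff z = 0

/-- `f` is a constant (a complex scalar), i.e. independent of `ħ`. -/
def IsConstL (f : LH) : Prop := ∀ z : ℤ, z ≠ 0 → f.coeff z = 0

section ops

variable {σ R : Type} [CommRing R] {n : ℕ}

/-- Formal partial derivative `∂/∂x` on multivariate formal power series. -/
def pd (x : σ) (f : MvPowerSeries σ R) : MvPowerSeries σ R :=
  fun d => ((d x + 1 : ℕ) : R) * MvPowerSeries.coeff (R := R) (d + Finsupp.single x 1) f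

/-- Euler derivative `x·∂/∂x` on multivariate formal power series. -/
def eulerD (x : σ) (f : MvPowerSeries σ R) : MvPowerSeries σ R :=
  fun d => ((d x : ℕ) : R) * MvPowerSeries.coeff (R := R) d f

/-- Entrywise partial derivative of a matrix of power series. -/
def mpd (x : σ) (M : Matrix (Fin n) (Fin n) (MvPowerSeries σ R)) :
    Matrix (Fin n) (Fin n) (MvPowerSeries σ R) := M.map (pd x)

/-- Entrywise Euler derivative of a matrix of power series. -/
def meu (x : σ) (M : Matrix (Fin n) (Fin n) (MvPowerSeries σ R)) :
    Matrix (Fin n) (Fin n) (MvPowerSeries σ R) := M.map (eulerD x)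

/-- A constant matrix, viewed as a matrix of power series. -/
def mC (M : Matrix (Fin n) (Fin n) R) : Matrix (Fin n) (Fin n) (MvPowerSeries σ R) :=
  M.map (MvPowerSeries.C (σ := σ) (R := R))

/-- Constant term (restriction to `Q = t = 0`) of a matrix of power series. -/
def m0 (M : Matrix (Fin n) (Fin n) (MvPowerSeries σ R)) : Matrix (Fin n) (Fin n) R :=
  M.map (MvPowerSeries.constantCoeff (σ := σ) (R := R))

end ops

section lops

variable {σ : Type} {n : ℕ}

/-- The scalar `ħ` inside `ℂ((ħ⁻¹))[[Q,t]]`. -/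
def hbarC (σ : Type) : MvPowerSeries σ LH := MvPowerSeries.C (σ := σ) (R := LH) hbar

/-- The entries of the matrix `M` lie in `ℂ[ħ][[Q,t]]`. -/
def MatPolyH (M : Matrix (Fin n) (Fin n) (MvPowerSeries σ LH)) : Prop :=
  ∀ (i j : Fin n) (d : σ →₀ ℕ), InPolyH (MvPowerSeries.coeff (R := LH) d (M i j))

/-- The entries of the matrix `M` lie in `ℂ[[Q,t]]`, i.e. are independent of `ħ`. -/
def MatNoH (M : Matrix (Fin n) (Fin n) (MvPowerSeries σ LH)) : Prop :=
  ∀ (i j : Fin n) (d : σ →₀ ℕ), IsConstL (MvPowerSeries.coeff (R := LH) d (M i j))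

/-- The first-order operator `v ↦ ħ·(x ∂/∂x)v + A·v` on column vectors. -/
def nablaE (x : σ) (A : Matrix (Fin n) (Fin n) (MvPowerSeries σ LH))
    (v : Fin n → MvPowerSeries σ LH) : Fin n → MvPowerSeries σ LH :=
  fun i => hbarC σ * eulerD x (v i) + A.mulVec v i

/-- The first-order operator `v ↦ ħ·(∂/∂x)v + A·v` on column vectors. -/
def nablaP (x : σ) (A : Matrix (Fin n) (Fin n) (MvPowerSeries σ LH))
    (v : Fin n → MvPowerSeries σ LH) : Fin n → MvPowerSeries σ LH :=
  fun i => hbarC σ * pd x (v i) + A.mulVec v i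

end lops

section S2aux

open Finset

/-- Truncation of a Laurent series to `z ≤ 0` (the `ℂ[ħ]` part). -/
def pip (f : LH) : LH where
  coeff z := if z ≤ 0 then f.coeff z else 0
  isPWO_support' := f.isPWO_support'.mono (by
    intro z hz
    simp only [Function.mem_support] at hz ⊢
    intro h
    apply hz
    simp [h])

/-- The complementary part (`ħ⁻¹·ℂ[[ħ⁻¹]]` part). -/
def pim (f : LH) : LH := f - pip f

lemma pip_coeff (f : LH) (z : ℤ) : (pip f).coeff z = if z ≤ 0 then f.coeff z else 0 := rfl

lemma pip_add_pim (f : LH) : pip f + pim f = f := by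
  simp [pim]

lemma inPolyH_pip (f : LH) : InPolyH (pip f) := by
  intro z hz
  simp [pip_coeff, not_le.mpr hz]

lemma inPSinvPos_pim (f : LH) : InPSinvPos (pim f) := by
  intro z hz
  simp [pim, HahnSeries.coeff_sub, pip_coeff, hz]

lemma inPolyH_one : InPolyH (1 : LH) := by
  intro z hz
  rw [HahnSeries.coeff_one, if_neg (by omega)]

lemma inPolyH_zero : InPolyH (0 : LH) := fun z _ => rfl

lemma inPSinv_one : InPSinv (1 : LH) := by
  intro z hz
  rw [HahnSeries.coeff_one, if_neg (by omega)]

lemma inPSinv_zero : InPSinv (0 : LH) := fun z _ => rfl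

lemma inPSinvPos_zero : InPSinvPos (0 : LH) := fun z _ => rfl

lemma InPolyH.sub {f g : LH} (hf : InPolyH f) (hg : InPolyH g) : InPolyH (f - g) := by
  intro z hz
  rw [HahnSeries.coeff_sub, hf z hz, hg z hz, sub_zero]

lemma InPSinvPos.sub {f g : LH} (hf : InPSinvPos f) (hg : InPSinvPos g) : InPSinvPos (f - g) := by
  intro z hz
  rw [HahnSeries.coeff_sub, hf z hz, hg z hz, sub_zero]

lemma InPSinvPos.inPSinv {f : LH} (hf : InPSinvPos f) : InPSinv f :=
  fun z hz => hf z hz.le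

lemma eq_zero_of_polyH_of_psinvPos {f : LH} (h1 : InPolyH f) (h2 : InPSinvPos f) : f = 0 := by
  ext z
  rcases le_or_gt z 0 with h | h
  · exact h2 z h
  · exact h1 z h

variable {n m : ℕ}

/-- Matrix of `d`-coefficients. -/
def cf (d : Fin m →₀ ℕ) (P : Matrix (Fin n) (Fin n) (MvPowerSeries (Fin m) LH)) :
    Matrix (Fin n) (Fin n) LH :=
  Matrix.of fun i j => MvPowerSeries.coeff (R := LH) d (P i j)

lemma cf_apply (d : Fin m →₀ ℕ) (P : Matrix (Fin n) (Fin n) (MvPowerSeries (Fin m) LH))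
    (i j : Fin n) : cf d P i j = MvPowerSeries.coeff (R := LH) d (P i j) := rfl

lemma cf_zero_eq_m0 (P : Matrix (Fin n) (Fin n) (MvPowerSeries (Fin m) LH)) :
    cf 0 P = m0 P := by
  ext i j
  simp [cf, m0, MvPowerSeries.coeff_zero_eq_constantCoeff]

lemma cf_mul (d : Fin m →₀ ℕ) (P Q : Matrix (Fin n) (Fin n) (MvPowerSeries (Fin m) LH)) :
    cf d (P * Q) = ∑ p ∈ Finset.HasAntidiagonal.antidiagonal d, cf p.1 P * cf p.2 Q := by
  ext i j
  simp only [cf, Matrix.of_apply, Matrix.mul_apply, Finset.sum_apply, Matrix.sum_apply, map_sum,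
    MvPowerSeries.coeff_mul]
  rw [Finset.sum_comm]

lemma cf_one (d : Fin m →₀ ℕ) :
    cf d (1 : Matrix (Fin n) (Fin n) (MvPowerSeries (Fin m) LH)) =
      if d = 0 then 1 else 0 := by
  ext i j
  simp only [cf, Matrix.of_apply, Matrix.one_apply]
  by_cases hij : i = j <;> by_cases hd : d = 0 <;>
    simp [hij, hd, MvPowerSeries.coeff_one, Matrix.one_apply]

lemma m0_mul (P Q : Matrix (Fin n) (Fin n) (MvPowerSeries (Fin m) LH)) :
    m0 (P * Q) = m0 P * m0 Q := by
  ext i j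
  simp [m0, Matrix.mul_apply, map_sum]

/-- Degree of a multi-index. -/
def degs (d : Fin m →₀ ℕ) : ℕ := d.sum fun _ e => e

lemma degs_add (a b : Fin m →₀ ℕ) : degs (a + b) = degs a + degs b :=
  Finsupp.sum_add_index' (fun _ => rfl) (fun _ _ _ => rfl)

lemma degs_pos {a : Fin m →₀ ℕ} (h : a ≠ 0) : 0 < degs a := by
  rcases Nat.eq_zero_or_pos (degs a) with h0 | h0
  · exfalso
    apply h
    ext x
    by_cases hx : x ∈ a.support
    · have := Finset.sum_eq_zero_iff.mp h0 x hx
      simpa using this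
    · simpa using Finsupp.notMem_support_iff.mp hx
  · exact h0

/-- The pair of Birkhoff factors `(L₊, L₋)` coefficient matrices, by recursion on degree. -/
def AB (L : Matrix (Fin n) (Fin n) (MvPowerSeries (Fin m) LH)) (d : Fin m →₀ ℕ) :
    Matrix (Fin n) (Fin n) LH × Matrix (Fin n) (Fin n) LH :=
  if hd : d = 0 then (1, 1)
  else
    ((cf d L - ∑ p ∈ (Finset.HasAntidiagonal.antidiagonal d).attach,
        if hp : p.1.1 ≠ 0 ∧ p.1.2 ≠ 0 then (AB L p.1.1).1 * (AB L p.1.2).2 else 0).map pip,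
     (cf d L - ∑ p ∈ (Finset.HasAntidiagonal.antidiagonal d).attach,
        if hp : p.1.1 ≠ 0 ∧ p.1.2 ≠ 0 then (AB L p.1.1).1 * (AB L p.1.2).2 else 0).map pim)
  termination_by degs d
  decreasing_by
  all_goals
    have hm := Finset.HasAntidiagonal.mem_antidiagonal.mp p.2
    have h12 : degs p.1.1 + degs p.1.2 = degs d := by rw [← degs_add, hm]
    have h1 := degs_pos hp.1
    have h2 := degs_pos hp.2
    omega

lemma AB_zero (L : Matrix (Fin n) (Fin n) (MvPowerSeries (Fin m) LH)) :
    AB L 0 = (1, 1) := by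
  rw [AB]; simp

lemma AB_ne (L : Matrix (Fin n) (Fin n) (MvPowerSeries (Fin m) LH)) {d : Fin m →₀ ℕ}
    (hd : d ≠ 0) :
    AB L d =
      ((cf d L - ∑ p ∈ Finset.HasAntidiagonal.antidiagonal d,
          if p.1 ≠ 0 ∧ p.2 ≠ 0 then (AB L p.1).1 * (AB L p.2).2 else 0).map pip,
       (cf d L - ∑ p ∈ Finset.HasAntidiagonal.antidiagonal d,
          if p.1 ≠ 0 ∧ p.2 ≠ 0 then (AB L p.1).1 * (AB L p.2).2 else 0).map pim) := by
  rw [AB, dif_neg hd]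
  simp only [dite_eq_ite]
  rw [Finset.sum_attach (Finset.HasAntidiagonal.antidiagonal d)
    (fun p => if p.1 ≠ 0 ∧ p.2 ≠ 0 then (AB L p.1).1 * (AB L p.2).2 else 0)]

lemma map_pip_add_map_pim (C : Matrix (Fin n) (Fin n) LH) :
    C.map pip + C.map pim = C := by
  ext i j
  simp [Matrix.map_apply, Matrix.add_apply, pip_add_pim]

lemma AB_fst_polyH (L : Matrix (Fin n) (Fin n) (MvPowerSeries (Fin m) LH))
    (d : Fin m →₀ ℕ) (i j : Fin n) : InPolyH ((AB L d).1 i j) := by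
  by_cases hd : d = 0
  · subst hd
    rw [AB_zero]
    rw [show ((1, 1) : Matrix (Fin n) (Fin n) LH × Matrix (Fin n) (Fin n) LH).1 = 1 from rfl,
      Matrix.one_apply]
    split_ifs
    · exact inPolyH_one
    · exact inPolyH_zero
  · rw [AB_ne L hd]
    exact inPolyH_pip _

lemma AB_snd_psinvPos (L : Matrix (Fin n) (Fin n) (MvPowerSeries (Fin m) LH))
    {d : Fin m →₀ ℕ} (hd : d ≠ 0) (i j : Fin n) : InPSinvPos ((AB L d).2 i j) := by
  rw [AB_ne L hd]
  exact inPSinvPos_pim _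

lemma AB_snd_psinv (L : Matrix (Fin n) (Fin n) (MvPowerSeries (Fin m) LH))
    (d : Fin m →₀ ℕ) (i j : Fin n) : InPSinv ((AB L d).2 i j) := by
  by_cases hd : d = 0
  · subst hd
    rw [AB_zero]
    rw [show ((1, 1) : Matrix (Fin n) (Fin n) LH × Matrix (Fin n) (Fin n) LH).2 = 1 from rfl,
      Matrix.one_apply]
    split_ifs
    · exact inPSinv_one
    · exact inPSinv_zero
  · exact (AB_snd_psinvPos L hd i j).inPSinv

lemma filter_not_cond {d : Fin m →₀ ℕ} (hd : d ≠ 0) :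
    Finset.filter (fun p : (Fin m →₀ ℕ) × (Fin m →₀ ℕ) => ¬(p.1 ≠ 0 ∧ p.2 ≠ 0))
      (Finset.HasAntidiagonal.antidiagonal d) = {(0, d), (d, 0)} := by
  ext p
  simp only [Finset.mem_filter, Finset.HasAntidiagonal.mem_antidiagonal, Finset.mem_insert,
    Finset.mem_singleton, not_and_or, not_ne_iff]
  constructor
  · rintro ⟨hsum, h0 | h0⟩
    · left
      rw [Prod.ext_iff]
      exact ⟨h0, by rw [← hsum, h0, zero_add]⟩
    · right
      rw [Prod.ext_iff]
      exact ⟨by rw [← hsum, h0, add_zero], h0⟩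
  · rintro (rfl | rfl) <;> simp

lemma sum_antidiag_split {d : Fin m →₀ ℕ} (hd : d ≠ 0)
    (F G : (Fin m →₀ ℕ) → Matrix (Fin n) (Fin n) LH) :
    ∑ p ∈ Finset.HasAntidiagonal.antidiagonal d, F p.1 * G p.2
      = F 0 * G d + F d * G 0 +
        ∑ p ∈ Finset.HasAntidiagonal.antidiagonal d, (if p.1 ≠ 0 ∧ p.2 ≠ 0 then F p.1 * G p.2 else 0) := by
  classical
  rw [← Finset.sum_filter_add_sum_filter_not (Finset.HasAntidiagonal.antidiagonal d)
    (fun p => p.1 ≠ 0 ∧ p.2 ≠ 0) (fun p => F p.1 * G p.2)]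
  rw [filter_not_cond hd, Finset.sum_pair (by
    intro h
    rw [Prod.ext_iff] at h
    exact hd h.1.symm)]
  rw [Finset.sum_filter]
  abel

lemma key (L : Matrix (Fin n) (Fin n) (MvPowerSeries (Fin m) LH)) (hL0 : m0 L = 1)
    (d : Fin m →₀ ℕ) :
    cf d L = ∑ p ∈ Finset.HasAntidiagonal.antidiagonal d, (AB L p.1).1 * (AB L p.2).2 := by
  by_cases hd : d = 0
  · subst hd
    rw [cf_zero_eq_m0, hL0, Finsupp.antidiagonal_zero, Finset.sum_singleton, AB_zero]
    simp
  · rw [sum_antidiag_split hd (fun e => (AB L e).1) (fun e => (AB L e).2)]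
    simp only [AB_zero]
    rw [AB_ne L hd]
    simp only
    rw [one_mul, mul_one]
    rw [add_comm ((cf d L -
        ∑ p ∈ Finset.HasAntidiagonal.antidiagonal d,
          if p.1 ≠ 0 ∧ p.2 ≠ 0 then (AB L p.1).1 * (AB L p.2).2 else 0).map pim)]
    rw [map_pip_add_map_pim, sub_add_cancel]

def Lpart (L : Matrix (Fin n) (Fin n) (MvPowerSeries (Fin m) LH)) :
    Matrix (Fin n) (Fin n) (MvPowerSeries (Fin m) LH) :=
  Matrix.of fun i j d => (AB L d).1 i j

def Mpart (L : Matrix (Fin n) (Fin n) (MvPowerSeries (Fin m) LH)) :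
    Matrix (Fin n) (Fin n) (MvPowerSeries (Fin m) LH) :=
  Matrix.of fun i j d => (AB L d).2 i j

lemma cf_Lpart (L : Matrix (Fin n) (Fin n) (MvPowerSeries (Fin m) LH)) (d : Fin m →₀ ℕ) :
    cf d (Lpart L) = (AB L d).1 := by
  ext i j
  simp [cf, Lpart, MvPowerSeries.coeff_apply]
  rfl

lemma cf_Mpart (L : Matrix (Fin n) (Fin n) (MvPowerSeries (Fin m) LH)) (d : Fin m →₀ ℕ) :
    cf d (Mpart L) = (AB L d).2 := by
  ext i j
  simp [cf, Mpart, MvPowerSeries.coeff_apply]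
  rfl

lemma cf_ext {P Q : Matrix (Fin n) (Fin n) (MvPowerSeries (Fin m) LH)}
    (h : ∀ d, cf d P = cf d Q) : P = Q := by
  refine Matrix.ext fun i j => ?_
  apply MvPowerSeries.ext
  intro d
  exact congrFun (congrFun (h d) i) j

lemma cf_sub (d : Fin m →₀ ℕ) (P Q : Matrix (Fin n) (Fin n) (MvPowerSeries (Fin m) LH)) :
    cf d (P - Q) = cf d P - cf d Q := by
  ext i j
  simp [cf, Matrix.sub_apply, map_sub]

end S2aux


/-- formal Birkhoff factorization: existence and uniqueness of
`L = L₊ · L₋` with `L₊` over `ℂ[ħ][[x]]`, `L₊|_{x=0} = Id`, and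
`L₋ ∈ Id + ħ⁻¹·M_n(ℂ[[ħ⁻¹]][[x]])`. -/
theorem statement2 (n m : ℕ) (hn : 1 ≤ n) (hm : 1 ≤ m)
    (L : Matrix (Fin n) (Fin n) (MvPowerSeries (Fin m) LH))
    (hL0 : m0 L = 1) :
    ∃! P : Matrix (Fin n) (Fin n) (MvPowerSeries (Fin m) LH) ×
           Matrix (Fin n) (Fin n) (MvPowerSeries (Fin m) LH),
      -- `L₊` has entries in `ℂ[ħ][[x]]`
      (∀ (i j : Fin n) (d : Fin m →₀ ℕ), InPolyH (MvPowerSeries.coeff (R := LH) d (P.1 i j))) ∧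
      -- `L₋` has entries in `ℂ[[ħ⁻¹]][[x]]`
      (∀ (i j : Fin n) (d : Fin m →₀ ℕ), InPSinv (MvPowerSeries.coeff (R := LH) d (P.2 i j))) ∧
      -- `L = L₊ · L₋`
      L = P.1 * P.2 ∧
      -- `L₊|_{x=0} = Id`
      m0 P.1 = 1 ∧
      -- `L₋ ∈ Id + ħ⁻¹·M_n(ℂ[[ħ⁻¹]][[x]])`
      (∀ (i j : Fin n) (d : Fin m →₀ ℕ), InPSinvPos (MvPowerSeries.coeff (R := LH) d ((P.2 - 1) i j))) := by
  classical
  refine ⟨(Lpart L, Mpart L), ⟨?_, ?_, ?_, ?_, ?_⟩, ?_⟩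
  · intro i j d
    have h := AB_fst_polyH L d i j
    rwa [← cf_Lpart L d] at h
  · intro i j d
    have h := AB_snd_psinv L d i j
    rwa [← cf_Mpart L d] at h
  · apply cf_ext
    intro d
    rw [cf_mul]
    simp only [cf_Lpart, cf_Mpart]
    exact key L hL0 d
  · rw [← cf_zero_eq_m0, cf_Lpart, AB_zero]
  · intro i j d
    have e : MvPowerSeries.coeff (R := LH) d ((Mpart L - 1) i j) = (cf d (Mpart L - 1)) i j := rfl
    rw [e, cf_sub, cf_Mpart, cf_one]
    by_cases hd : d = 0
    · subst hd
      rw [if_pos rfl, AB_zero]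
      simp only [sub_self, Matrix.zero_apply]
      exact inPSinvPos_zero
    · rw [if_neg hd, sub_zero]
      exact AB_snd_psinvPos L hd i j
  · rintro ⟨P, Q⟩ ⟨h1, h2, h3, h4, h5⟩
    have hQ0 : m0 Q = 1 := by
      have hmm := congrArg m0 h3
      rw [m0_mul, h4, one_mul] at hmm
      rw [← hmm, hL0]
    have hQd : ∀ d : Fin m →₀ ℕ, d ≠ 0 → ∀ i j, InPSinvPos (cf d Q i j) := by
      intro d hd i j
      have h := h5 i j d
      have e : MvPowerSeries.coeff (R := LH) d ((Q - 1) i j) = (cf d (Q - 1)) i j := rfl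
      rw [e, cf_sub, cf_one, if_neg hd, sub_zero] at h
      exact h
    have base : cf (0 : Fin m →₀ ℕ) P = (AB L 0).1 ∧ cf (0 : Fin m →₀ ℕ) Q = (AB L 0).2 := by
      rw [AB_zero, cf_zero_eq_m0, cf_zero_eq_m0, h4, hQ0]
      exact ⟨rfl, rfl⟩
    have main : ∀ N : ℕ, ∀ d : Fin m →₀ ℕ, degs d ≤ N →
        cf d P = (AB L d).1 ∧ cf d Q = (AB L d).2 := by
      intro N
      induction N with
      | zero =>
        intro d hdeg
        have hd0 : d = 0 := by
          by_contra hc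
          have := degs_pos hc
          omega
        subst hd0
        exact base
      | succ N ih =>
        intro d hdeg
        by_cases hd0 : d = 0
        · subst hd0; exact base
        · have hLd : cf d L = ∑ p ∈ Finset.HasAntidiagonal.antidiagonal d, cf p.1 P * cf p.2 Q := by
            conv_lhs => rw [h3]
            rw [cf_mul]
          rw [sum_antidiag_split hd0 (fun e => cf e P) (fun e => cf e Q)] at hLd
          have c0P : cf (0 : Fin m →₀ ℕ) P = 1 := by rw [cf_zero_eq_m0, h4]
          have c0Q : cf (0 : Fin m →₀ ℕ) Q = 1 := by rw [cf_zero_eq_m0, hQ0]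
          rw [c0P, c0Q, one_mul, mul_one] at hLd
          have hS : (∑ p ∈ Finset.HasAntidiagonal.antidiagonal d,
                if p.1 ≠ 0 ∧ p.2 ≠ 0 then cf p.1 P * cf p.2 Q else 0)
              = ∑ p ∈ Finset.HasAntidiagonal.antidiagonal d,
                if p.1 ≠ 0 ∧ p.2 ≠ 0 then (AB L p.1).1 * (AB L p.2).2 else 0 := by
            refine Finset.sum_congr rfl fun p hp => ?_
            by_cases hc : p.1 ≠ 0 ∧ p.2 ≠ 0
            · rw [if_pos hc, if_pos hc]
              have hmem := Finset.HasAntidiagonal.mem_antidiagonal.mp hp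
              have hdadd : degs p.1 + degs p.2 = degs d := by rw [← degs_add, hmem]
              have g1 := degs_pos hc.1
              have g2 := degs_pos hc.2
              rw [(ih p.1 (by omega)).1, (ih p.2 (by omega)).2]
            · rw [if_neg hc, if_neg hc]
          rw [hS] at hLd
          have hKey := key L hL0 d
          rw [sum_antidiag_split hd0 (fun e => (AB L e).1) (fun e => (AB L e).2)] at hKey
          simp only [AB_zero] at hKey
          rw [one_mul, mul_one] at hKey
          have hsum : cf d Q + cf d P = (AB L d).2 + (AB L d).1 :=
            add_right_cancel (hLd.symm.trans hKey)
          have hP : cf d P = (AB L d).1 := by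
            refine Matrix.ext fun i j => ?_
            have hdiff : cf d P i j - (AB L d).1 i j = 0 := by
              apply eq_zero_of_polyH_of_psinvPos
              · exact InPolyH.sub (h1 i j d) (AB_fst_polyH L d i j)
              · have h' : cf d Q i j + cf d P i j = (AB L d).2 i j + (AB L d).1 i j := by
                  have := congrFun (congrFun hsum i) j
                  simpa [Matrix.add_apply] using this
                have heq : cf d P i j - (AB L d).1 i j = (AB L d).2 i j - cf d Q i j := by
                  linear_combination h'
                rw [heq]
                exact InPSinvPos.sub (AB_snd_psinvPos L hd0 i j) (hQd d hd0 i j)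
            exact sub_eq_zero.mp hdiff
          refine ⟨hP, ?_⟩
          have hsum2 := hsum
          rw [hP] at hsum2
          exact add_right_cancel hsum2
    have hP : P = Lpart L := by
      apply cf_ext; intro d
      rw [cf_Lpart]
      exact (main (degs d) d le_rfl).1
    have hQ : Q = Mpart L := by
      apply cf_ext; intro d
      rw [cf_Mpart]
      exact (main (degs d) d le_rfl).2
    rw [Prod.ext_iff]
    exact ⟨hP, hQ⟩
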